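/- Let g, h : Σ* → Δ* be monoid morphisms with g and h non-erasing, and let w = a_1 z̄_1 a_2 z̄_2 ⋯ a_n z̄_n be a word with a_i ∈ Σ and z_i ∈ Σ* (z̄ denoting the letterwise marked copy over a disjoint barred alphabet). Then w belongs to (u ⧢ ū) for some word u ∈ Σ* if and only if a_1 a_2 ⋯ a_n = z_1 z_2 ⋯ z_n. Consequently, the language { a_1 z̄_1 ⋯ a_n z̄_n : g(a_1⋯a_n) = h(z_1⋯z_n) } meets ⋃_u (u ⧢ ū) if and only if the PCP instance (g,h) has a nonempty solution, i.e., some nonempty x with g(x) = h(x). -/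

import Mathlib

/-- `Shuffle u v w` means `w` is an interleaving (shuffle) of `u` and `v`. -/
inductive Shuffle {α : Type*} : List α → List α → List α → Prop
  | nil : Shuffle [] [] []
  | left {a : α} {u v w : List α} : Shuffle u v w → Shuffle (a :: u) v (a :: w)
  | right {a : α} {u v w : List α} : Shuffle u v w → Shuffle u (a :: v) (a :: w)

/-- The word `a₁ z̄₁ a₂ z̄₂ ⋯ aₙ z̄ₙ` over `Σ ⊕ Σ̄` determined by pairs `(aᵢ, zᵢ)`. -/
def mixedWord {σ : Type*} (ps : List (σ × List σ)) : List (σ ⊕ σ) :=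
  (ps.map fun p => Sum.inl p.1 :: p.2.map Sum.inr).flatten

lemma shuffle_proj {σ : Type*} (w : List (σ ⊕ σ)) :
    Shuffle ((w.filterMap Sum.getLeft?).map Sum.inl)
      ((w.filterMap Sum.getRight?).map Sum.inr) w := by
  induction w with
  | nil => exact Shuffle.nil
  | cons a w ih =>
    cases a with
    | inl a => simpa [List.filterMap_cons] using Shuffle.left ih
    | inr a => simpa [List.filterMap_cons] using Shuffle.right ih

lemma shuffle_left_eq {σ : Type*} {x y w : List (σ ⊕ σ)} (s : Shuffle x y w) :
    (∀ a ∈ y, Sum.getLeft? a = none) →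
      w.filterMap Sum.getLeft? = x.filterMap Sum.getLeft? := by
  induction s with
  | nil => intro _; rfl
  | @left a u v w s ih =>
    intro hy
    simp only [List.filterMap_cons, ih hy]
  | @right a u v w s ih =>
    intro hy
    have ha := hy a List.mem_cons_self
    simp only [List.filterMap_cons, ha, ih fun b hb => hy b (List.mem_cons_of_mem _ hb)]

lemma shuffle_right_eq {σ : Type*} {x y w : List (σ ⊕ σ)} (s : Shuffle x y w) :
    (∀ a ∈ x, Sum.getRight? a = none) →
      w.filterMap Sum.getRight? = y.filterMap Sum.getRight? := by
  induction s with
  | nil => intro _; rfl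
  | @left a u v w s ih =>
    intro hx
    have ha := hx a List.mem_cons_self
    simp only [List.filterMap_cons, ha, ih fun b hb => hx b (List.mem_cons_of_mem _ hb)]
  | @right a u v w s ih =>
    intro hx
    simp only [List.filterMap_cons, ih hx]

lemma mixed_left {σ : Type*} (ps : List (σ × List σ)) :
    (mixedWord ps).filterMap Sum.getLeft? = ps.map Prod.fst := by
  induction ps with
  | nil => rfl
  | cons p ps ih =>
    simp only [mixedWord, List.map_cons, List.flatten_cons, List.filterMap_cons,
      List.filterMap_append, List.filterMap_map, Function.comp_def, Sum.getLeft?] at ih ⊢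
    simp [ih]

lemma mixed_right {σ : Type*} (ps : List (σ × List σ)) :
    (mixedWord ps).filterMap Sum.getRight? = (ps.map Prod.snd).flatten := by
  induction ps with
  | nil => rfl
  | cons p ps ih =>
    simp only [mixedWord, List.map_cons, List.flatten_cons, List.filterMap_cons,
      List.filterMap_append, List.filterMap_map, Function.comp_def, Sum.getRight?] at ih ⊢
    simp [ih]

lemma diag_fst {σ : Type*} (x : List σ) :
    (x.map fun a => (a, [a])).map Prod.fst = x := by
  induction x <;> simp_all

lemma diag_snd {σ : Type*} (x : List σ) :
    ((x.map fun a => (a, [a])).map Prod.snd).flatten = x := by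
  induction x <;> simp_all

/-- A word `a₁ z̄₁ ⋯ aₙ z̄ₙ` lies in `u ⧢ ū` for some `u` iff `a₁⋯aₙ = z₁⋯zₙ`;
consequently, for non-erasing morphisms `g, h`, the language
`{a₁ z̄₁ ⋯ aₙ z̄ₙ : n ≥ 1, g(a₁⋯aₙ) = h(z₁⋯zₙ)}` meets `⋃_u (u ⧢ ū)` iff
the PCP instance `(g, h)` has a nonempty solution. -/
theorem stmt_19 {σ Δ : Type*} (g h : List σ → List Δ)
    (hg : ∀ x y, g (x ++ y) = g x ++ g y) (hh : ∀ x y, h (x ++ y) = h x ++ h y)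
    (hgne : ∀ a : σ, g [a] ≠ []) (hhne : ∀ a : σ, h [a] ≠ []) :
    (∀ ps : List (σ × List σ),
      (∃ u : List σ, Shuffle (u.map Sum.inl) (u.map Sum.inr) (mixedWord ps)) ↔
        ps.map Prod.fst = (ps.map Prod.snd).flatten) ∧
    ((∃ ps : List (σ × List σ), ps ≠ [] ∧
        g (ps.map Prod.fst) = h ((ps.map Prod.snd).flatten) ∧
        ∃ u : List σ, Shuffle (u.map Sum.inl) (u.map Sum.inr) (mixedWord ps)) ↔
      ∃ x : List σ, x ≠ [] ∧ g x = h x) := by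
  have key : ∀ ps : List (σ × List σ),
      (∃ u : List σ, Shuffle (u.map Sum.inl) (u.map Sum.inr) (mixedWord ps)) ↔
        ps.map Prod.fst = (ps.map Prod.snd).flatten := by
    intro ps
    constructor
    · rintro ⟨u, s⟩
      have hl := shuffle_left_eq s (by simp)
      have hr := shuffle_right_eq s (by simp)
      rw [mixed_left] at hl
      rw [mixed_right] at hr
      have hlu : ((u.map Sum.inl : List (σ ⊕ σ)).filterMap Sum.getLeft?) = u := by
        simp [List.filterMap_map, Function.comp_def, Sum.getLeft?]
      have hru : ((u.map Sum.inr : List (σ ⊕ σ)).filterMap Sum.getRight?) = u := by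
        simp [List.filterMap_map, Function.comp_def, Sum.getRight?]
      rw [hlu] at hl; rw [hru] at hr
      rw [hl, hr]
    · intro hEq
      refine ⟨ps.map Prod.fst, ?_⟩
      have := shuffle_proj (mixedWord ps)
      rwa [mixed_left, mixed_right, ← hEq] at this
  refine ⟨key, ?_⟩
  constructor
  · rintro ⟨ps, hne, hgh, hsh⟩
    have hEq := (key ps).mp hsh
    refine ⟨ps.map Prod.fst, by simpa using hne, ?_⟩
    rw [hgh, hEq]
  · rintro ⟨x, hne, hgh⟩
    refine ⟨x.map fun a => (a, [a]), by simpa using hne, ?_, ?_⟩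
    · rw [diag_fst, diag_snd]; exact hgh
    · rw [key, diag_fst, diag_snd]
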